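/- The set of positive integers represented by t1^2 + t2^2 has natural density 0. -/

import Mathlib

open Filter ArithmeticFunction vonMangoldt LSeries

lemma not_summable_one_div_primes_residue {q : ℕ} [NeZero q] {a : ZMod q} (ha : IsUnit a) :
    ¬ Summable ({p : ℕ | p.Prime ∧ (p : ZMod q) = a}.indicator fun n => (n : ℝ)⁻¹) := by
  intro hT
  set T : ℕ → ℝ := {p : ℕ | p.Prime ∧ (p : ZMod q) = a}.indicator (fun n => (n:ℝ)⁻¹) with hTdef
  have hT0 : ∀ n, 0 ≤ T n := fun n => Set.indicator_apply_nonneg (fun _ => by positivity)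
  obtain ⟨C, hC⟩ := LSeries_residueClass_lower_bound ha
  have hB : Summable fun n : ℕ => (if n.Prime then 0 else residueClass a n) / n :=
    summable_residueClass_non_primes_div a
  set B := ∑' n : ℕ, (if n.Prime then 0 else residueClass a n) / n with hBdef
  have hq : (0:ℝ) < (q.totient : ℝ)⁻¹ := inv_pos.mpr (mod_cast q.totient.pos_of_neZero)
  set ε := (q.totient:ℝ)⁻¹ / 2 with hεdef
  have hε : 0 < ε := by positivity
  obtain ⟨P, hP⟩ : ∃ P : ℕ, ∑' k, T (k + P) < ε := by
    have := (tendsto_sum_nat_add T).eventually (eventually_lt_nhds hε)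
    exact this.exists
  set A := ∑ n ∈ Finset.range P, Real.log n with hAdef
  have hA0 : 0 ≤ A := Finset.sum_nonneg fun n _ => Real.log_natCast_nonneg n
  have hB0 : 0 ≤ B := tsum_nonneg fun n => by
    have := residueClass_nonneg a n; positivity
  have key : ∀ x ∈ Set.Ioc (1:ℝ) 2, ε / (x-1) ≤ B + A + C := by
    intro x hx
    have hx1 : 1 < x := hx.1
    have hsum : Summable fun n : ℕ => residueClass a n / (n:ℝ)^x :=
      summable_real_of_abscissaOfAbsConv_lt
        ((abscissaOfAbsConv_residueClass_le_one a).trans_lt (by exact_mod_cast hx1))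
    have hg0 : ∀ n : ℕ, 0 ≤ residueClass a n / (n:ℝ)^x := fun n => by
      have := residueClass_nonneg a n; positivity
    set gp : ℕ → ℝ := fun n => if n.Prime then residueClass a n / (n:ℝ)^x else 0 with hgp
    set gnp : ℕ → ℝ := fun n => if n.Prime then 0 else residueClass a n / (n:ℝ)^x with hgnp
    have hgp0 : ∀ n, 0 ≤ gp n := fun n => by
      simp only [hgp]; split; exacts [hg0 n, le_rfl]
    have hgnp0 : ∀ n, 0 ≤ gnp n := fun n => by
      simp only [hgnp]; split; exacts [le_rfl, hg0 n]
    have hgpS : Summable gp := hsum.of_nonneg_of_le hgp0 (fun n => by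
      simp only [hgp]; split; exacts [le_rfl, hg0 n])
    have hgnpS : Summable gnp := hsum.of_nonneg_of_le hgnp0 (fun n => by
      simp only [hgnp]; split; exacts [hg0 n, le_rfl])
    have hsplit : ∑' n, residueClass a n / (n:ℝ)^x = (∑' n, gp n) + ∑' n, gnp n := by
      rw [← Summable.tsum_add hgpS hgnpS]
      congr 1; ext n
      simp only [hgp, hgnp]; split <;> simp
    -- bound on non-prime part
    have hgnp_le : ∑' n, gnp n ≤ B := by
      refine Summable.tsum_le_tsum (fun n => ?_) hgnpS hB
      rcases Nat.eq_zero_or_pos n with rfl | hn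
      · simp [hgnp]
      · simp only [hgnp]
        split
        · positivity
        · refine div_le_div_of_nonneg_left (residueClass_nonneg a n) (by exact_mod_cast hn) ?_
          calc (n:ℝ) = (n:ℝ) ^ (1:ℝ) := (Real.rpow_one _).symm
          _ ≤ (n:ℝ) ^ x := Real.rpow_le_rpow_of_exponent_le (by exact_mod_cast hn) hx1.le
    -- bound on prime part
    have hxinv : 0 < (x - 1)⁻¹ := inv_pos.mpr (by linarith)
    have htail_le : ∀ k : ℕ, gp (k + P) ≤ (x-1)⁻¹ * T (k + P) := by
      intro k
      set n := k + P
      simp only [hgp]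
      split
      · rename_i hnp
        by_cases hna : (n : ZMod q) = a
        · have hrc : residueClass a n = Real.log n := by
            simp only [residueClass, Set.indicator, Set.mem_setOf_eq, hna, if_true,
              vonMangoldt_apply_prime hnp]
          have hTn : T n = (n:ℝ)⁻¹ := by
            simp only [hTdef, Set.indicator, Set.mem_setOf_eq, hnp, hna, and_self, if_true]
          rw [hrc, hTn]
          have hn0 : (0:ℝ) < n := by exact_mod_cast hnp.pos
          have hlog : Real.log n ≤ (n:ℝ) ^ (x-1) / (x-1) :=
            Real.log_le_rpow_div (le_of_lt hn0) (by linarith)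
          have hrw : (n:ℝ) ^ x = (n:ℝ) ^ (x-1) * n := by
            conv_lhs => rw [show x = (x-1)+1 by ring]
            rw [Real.rpow_add hn0, Real.rpow_one]
          calc Real.log n / (n:ℝ)^x ≤ ((n:ℝ) ^ (x-1) / (x-1)) / (n:ℝ)^x := by
                refine div_le_div_of_nonneg_right hlog ?_
                positivity
          _ = (x-1)⁻¹ * (n:ℝ)⁻¹ := by
                have hpow : ((n:ℝ) ^ (x-1)) ≠ 0 := (Real.rpow_pos_of_pos hn0 _).ne'
                rw [hrw, div_div,
                  show (x-1) * ((n:ℝ)^(x-1) * n) = (n:ℝ)^(x-1) * ((x-1) * n) by ring,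
                  div_mul_cancel_left₀ hpow, mul_inv]
        · have hrc : residueClass a n = 0 := by
            simp only [residueClass, Set.indicator, Set.mem_setOf_eq, hna, if_false]
          rw [hrc]
          simp only [zero_div]
          exact mul_nonneg hxinv.le (hT0 n)
      · exact mul_nonneg hxinv.le (hT0 _)
    have hgp_le : ∑' n, gp n ≤ A + ε / (x - 1) := by
      rw [← Summable.sum_add_tsum_nat_add P hgpS]
      gcongr
      · -- head
        refine Finset.sum_le_sum fun n _ => ?_
        simp only [hgp]
        split
        · rename_i hnp
          have h1 : residueClass a n / (n:ℝ)^x ≤ residueClass a n :=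
            div_le_self (residueClass_nonneg a n) <| by
              have : (1:ℝ) ≤ (n:ℝ) := by exact_mod_cast hnp.one_lt.le
              calc (1:ℝ) = 1 ^ x := (Real.one_rpow x).symm
              _ ≤ (n:ℝ) ^ x := Real.rpow_le_rpow (by norm_num) this (by linarith)
          exact h1.trans ((residueClass_le a n).trans (vonMangoldt_le_log))
        · exact Real.log_natCast_nonneg n
      · -- tail
        have hTtail : Summable fun k => T (k + P) := by
          exact (summable_nat_add_iff P).mpr hT
        calc ∑' k, gp (k + P) ≤ ∑' k, (x-1)⁻¹ * T (k + P) := by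
              refine Summable.tsum_le_tsum htail_le ((summable_nat_add_iff P).mpr hgpS) ?_
              exact hTtail.mul_left _
        _ = (x-1)⁻¹ * ∑' k, T (k + P) := tsum_mul_left
        _ ≤ (x-1)⁻¹ * ε := by
              exact mul_le_mul_of_nonneg_left hP.le hxinv.le
        _ = ε / (x-1) := by rw [div_eq_inv_mul]
    -- combine with lower bound
    have hlow := hC hx
    rw [hsplit] at hlow
    have : (q.totient:ℝ)⁻¹ / (x-1) - C ≤ (A + ε/(x-1)) + B := by
      exact hlow.trans (add_le_add hgp_le hgnp_le)
    have h2ε : (q.totient:ℝ)⁻¹ = ε + ε := by rw [hεdef]; ring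
    rw [h2ε, add_div] at this
    linarith
  -- get contradiction
  set R := max (B + A + C) 0 + 1 with hR
  have hR0 : 0 < R := by positivity
  set δ := min 1 (ε / R) with hδ
  have hδ0 : 0 < δ := lt_min one_pos (div_pos hε hR0)
  have hδ1 : δ ≤ 1 := min_le_left _ _
  have hx : (1 + δ) ∈ Set.Ioc (1:ℝ) 2 := ⟨by linarith, by linarith⟩
  have := key (1 + δ) hx
  rw [add_sub_cancel_left] at this
  have hRle : R ≤ ε / δ := by
    rw [le_div_iff₀ hδ0]
    calc R * δ ≤ R * (ε / R) := by
          exact mul_le_mul_of_nonneg_left (min_le_right _ _) hR0.le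
    _ = ε := by field_simp
  have : R ≤ B + A + C := hRle.trans this
  have : B + A + C < R := by
    rw [hR]
    have : B + A + C ≤ max (B + A + C) 0 := le_max_left _ _
    linarith
  linarith

open Finset

lemma sq_dvd_of_dvd_sq_add_sq {p : ℕ} (hp : p.Prime) (h3 : p % 4 = 3) {x y : ℤ}
    (h : (p:ℤ) ∣ x ^ 2 + y ^ 2) : (p:ℤ) ∣ x ∧ (p:ℤ) ∣ y := by
  haveI : Fact p.Prime := ⟨hp⟩
  set u : ZMod p := (x : ZMod p)
  set v : ZMod p := (y : ZMod p)
  have h0 : u ^ 2 + v ^ 2 = 0 := by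
    have := (ZMod.intCast_zmod_eq_zero_iff_dvd (x^2+y^2) p).mpr h
    push_cast at this
    exact this
  have hv : v = 0 := by
    by_contra hv
    have hsq : IsSquare (-1 : ZMod p) := by
      refine ⟨u * v⁻¹, ?_⟩
      have hv2 : v ^ 2 ≠ 0 := pow_ne_zero _ hv
      field_simp
      linear_combination -h0
    exact (ZMod.exists_sq_eq_neg_one_iff.mp hsq) h3
  have hu : u = 0 := by
    have : u ^ 2 = 0 := by rw [hv] at h0; simpa using h0
    exact pow_eq_zero_iff (n := 2) (by norm_num) |>.mp this
  exact ⟨(ZMod.intCast_zmod_eq_zero_iff_dvd x p).mp hu,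
    (ZMod.intCast_zmod_eq_zero_iff_dvd y p).mp hv⟩

lemma count_mod_le (N M : ℕ) (hM : 0 < M) (Q : ℕ → Prop) [DecidablePred Q] :
    ((Finset.Icc 1 N).filter (fun n => Q (n % M))).card
      ≤ (N / M + 1) * ((Finset.range M).filter Q).card := by
  rw [← Finset.card_range (N / M + 1), ← Finset.card_product]
  refine Finset.card_le_card_of_injOn (fun n => (n / M, n % M)) ?_ ?_
  · intro n hn
    simp only [Finset.mem_coe, Finset.mem_filter, Finset.mem_Icc] at hn
    simp only [Finset.mem_coe, Finset.mem_product, Finset.mem_range, Finset.mem_filter]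
    exact ⟨Nat.lt_succ_of_le (Nat.div_le_div_right hn.1.2), ⟨Nat.mod_lt _ hM, hn.2⟩⟩
  · intro a _ b _ hab
    rw [Prod.mk.injEq] at hab
    calc a = M * (a / M) + a % M := (Nat.div_add_mod a M).symm
    _ = M * (b / M) + b % M := by rw [hab.1, hab.2]
    _ = b := Nat.div_add_mod b M

lemma per_factor_le {p : ℕ} (hp : p.Prime) :
    ((Finset.range (p ^ 2)).filter (fun s => ¬(p ∣ s ∧ ¬ p ^ 2 ∣ s))).card
      ≤ p ^ 2 - (p - 1) := by
  classical
  have hsplit := Finset.card_filter_add_card_filter_not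
    (s := Finset.range (p ^ 2)) (p := fun s => p ∣ s ∧ ¬ p ^ 2 ∣ s)
  rw [Finset.card_range] at hsplit
  have hbad : p - 1 ≤ ((Finset.range (p ^ 2)).filter (fun s => p ∣ s ∧ ¬ p ^ 2 ∣ s)).card := by
    calc p - 1 = (Finset.Ico 1 p).card := (Nat.card_Ico 1 p).symm
    _ ≤ _ := by
      refine Finset.card_le_card_of_injOn (fun k => p * k) ?_ ?_
      · intro k hk
        rw [Finset.mem_coe, Finset.mem_Ico] at hk
        simp only [Finset.mem_coe, Finset.mem_filter, Finset.mem_range]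
        have hpk : p * k < p * p := mul_lt_mul_of_pos_left hk.2 hp.pos
        refine ⟨by rw [pow_two]; exact hpk, dvd_mul_right p k, fun hdvd => ?_⟩
        have h1 : p ^ 2 ≤ p * k := Nat.le_of_dvd (Nat.mul_pos hp.pos (by omega)) hdvd
        rw [pow_two] at h1
        omega
      · intro a _ b _ hab
        exact Nat.eq_of_mul_eq_mul_left hp.pos hab
  omega

lemma crt_count_le (F : Finset ℕ) (hF : ∀ p ∈ F, p.Prime) :
    ((Finset.range (∏ p ∈ F, p ^ 2)).filter
        (fun r => ∀ p ∈ F, ¬(p ∣ r ∧ ¬ p ^ 2 ∣ r))).card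
      ≤ ∏ p ∈ F, (p ^ 2 - (p - 1)) := by
  classical
  set M := ∏ p ∈ F, p ^ 2 with hM
  calc ((Finset.range M).filter (fun r => ∀ p ∈ F, ¬(p ∣ r ∧ ¬ p ^ 2 ∣ r))).card
      ≤ (F.pi (fun p => (Finset.range (p ^ 2)).filter
          (fun s => ¬(p ∣ s ∧ ¬ p ^ 2 ∣ s)))).card := by
        refine Finset.card_le_card_of_injOn (fun r => fun p _ => r % p ^ 2) ?_ ?_
        · intro r hr
          simp only [Finset.mem_coe, Finset.mem_filter, Finset.mem_range] at hr
          rw [Finset.mem_coe, Finset.mem_pi]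
          intro p hp
          have hpp := hF p hp
          have hp2 : 0 < p ^ 2 := pow_pos hpp.pos 2
          simp only [Finset.mem_filter, Finset.mem_range]
          refine ⟨Nat.mod_lt _ hp2, ?_⟩
          have hdp : p ∣ p ^ 2 := dvd_pow_self p two_ne_zero
          rw [Nat.dvd_mod_iff hdp, Nat.dvd_mod_iff dvd_rfl]
          exact hr.2 p hp
        · intro r hr r' hr' h
          simp only [Finset.mem_coe, Finset.mem_filter, Finset.mem_range] at hr hr'
          have hcong : ∀ p ∈ F, ((p:ℤ) ^ 2) ∣ (r : ℤ) - r' := by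
            intro p hp
            have heq : r % p ^ 2 = r' % p ^ 2 := congrFun (congrFun h p) hp
            have hm : r' ≡ r [MOD p ^ 2] := heq.symm
            have := (Nat.modEq_iff_dvd).mp hm
            exact_mod_cast this
          have hMcast : (M : ℤ) = ∏ p ∈ F, (p:ℤ) ^ 2 := by
            rw [hM]; push_cast; ring
          have hMdvd : (M : ℤ) ∣ (r : ℤ) - r' := by
            rw [hMcast]
            refine Finset.prod_dvd_of_coprime ?_ hcong
            intro p hp q hq hpq
            simp only [Function.onFun]
            rw [Int.isCoprime_iff_gcd_eq_one,
              show ((p:ℤ)^2) = ((p^2 : ℕ) : ℤ) by push_cast; ring,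
              show ((q:ℤ)^2) = ((q^2 : ℕ) : ℤ) by push_cast; ring,
              Int.gcd_natCast_natCast]
            exact ((Nat.coprime_primes (hF p hp) (hF q hq)).mpr hpq).pow 2 2
          have h0 : (r : ℤ) - r' = 0 := by
            refine Int.eq_zero_of_abs_lt_dvd hMdvd ?_
            have h1 : (r : ℤ) < M := by exact_mod_cast hr.1
            have h2 : (r' : ℤ) < M := by exact_mod_cast hr'.1
            have h3 : (0:ℤ) ≤ r := Int.natCast_nonneg r
            have h4 : (0:ℤ) ≤ r' := Int.natCast_nonneg r'
            rw [abs_sub_lt_iff]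
            constructor <;> linarith
          have := sub_eq_zero.mp h0
          exact_mod_cast this
    _ = ∏ p ∈ F, ((Finset.range (p ^ 2)).filter (fun s => ¬(p ∣ s ∧ ¬ p ^ 2 ∣ s))).card :=
        Finset.card_pi _ _
    _ ≤ ∏ p ∈ F, (p ^ 2 - (p - 1)) :=
        Finset.prod_le_prod' fun p hp => per_factor_le (hF p hp)

open Filter

/-- The natural density of a set of positive integers: limit of #(S ∩ [1,N])/N. -/
def natDensity (S : Set ℕ) (δ : ℝ) : Prop :=
  Tendsto (fun N : ℕ => (Nat.card {n : ℕ // n ∈ S ∧ 1 ≤ n ∧ n ≤ N} : ℝ) / N)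
    atTop (nhds δ)

set_option maxHeartbeats 1000000 in
theorem stmt2 : natDensity {n : ℕ | ∃ x y : ℤ, x ^ 2 + y ^ 2 = (n : ℤ)} 0 := by
  classical
  set S : Set ℕ := {n : ℕ | ∃ x y : ℤ, x ^ 2 + y ^ 2 = (n : ℤ)} with hS
  rw [natDensity, Metric.tendsto_atTop]
  intro ε hε
  have hε2 : (0:ℝ) < ε / 2 := by linarith
  -- divergence of sum of reciprocals of primes ≡ 3 mod 4
  set T : ℕ → ℝ := {p : ℕ | p.Prime ∧ (p : ZMod 4) = 3}.indicator (fun n => (n:ℝ)⁻¹) with hT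
  have hT0 : ∀ n, 0 ≤ T n := fun n => Set.indicator_apply_nonneg (fun _ => by positivity)
  have hns : ¬ Summable T :=
    not_summable_one_div_primes_residue (a := (3 : ZMod 4))
      (IsUnit.of_mul_eq_one (a := (3 : ZMod 4)) 3 (by decide))
  have hdiv : Tendsto (fun K => ∑ n ∈ Finset.range K, T n) atTop atTop := by
    by_contra h
    exact hns ((summable_iff_not_tendsto_nat_atTop_of_nonneg hT0).mpr h)
  obtain ⟨K, hK⟩ := (hdiv.eventually_ge_atTop (2 * (1 - Real.log (ε/2)))).exists
  set F := (Finset.range K).filter (fun p : ℕ => p.Prime ∧ (p : ZMod 4) = 3) with hF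
  have hFsum : 2 * (1 - Real.log (ε/2)) ≤ ∑ p ∈ F, (p:ℝ)⁻¹ := by
    refine hK.trans (le_of_eq ?_)
    rw [hF, Finset.sum_filter]
    refine Finset.sum_congr rfl fun n _ => ?_
    simp [hT, Set.indicator_apply, Set.mem_setOf_eq]
  have hFprime : ∀ p ∈ F, p.Prime := fun p hp => (Finset.mem_filter.mp hp).2.1
  have hF3 : ∀ p ∈ F, p % 4 = 3 := by
    intro p hp
    have h4 := (Finset.mem_filter.mp hp).2.2
    have : ((p:ℕ) : ZMod 4) = ((3:ℕ) : ZMod 4) := by exact_mod_cast h4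
    have := (ZMod.natCast_eq_natCast_iff' p 3 4).mp this
    simpa using this
  have hF2 : ∀ p ∈ F, 2 ≤ p := fun p hp => (hFprime p hp).two_le
  set M := ∏ p ∈ F, p ^ 2 with hM
  set Q := ∏ p ∈ F, (p ^ 2 - (p - 1)) with hQ
  have hM0 : 0 < M := Finset.prod_pos fun p hp => pow_pos (hFprime p hp).pos 2
  -- the density bound ∏ (1 - (p-1)/p²) < ε/2
  have hQM : (Q:ℝ) / (M:ℝ) < ε / 2 := by
    have hQcast : (Q:ℝ) = ∏ p ∈ F, ((p ^ 2 - (p - 1) : ℕ) : ℝ) := by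
      rw [hQ, Nat.cast_prod]
    have hMcast : (M:ℝ) = ∏ p ∈ F, ((p:ℝ)) ^ 2 := by
      rw [hM, Nat.cast_prod]
      exact Finset.prod_congr rfl fun p _ => by push_cast; ring
    have h1 : (Q:ℝ) / (M:ℝ) = ∏ p ∈ F, (((p ^ 2 - (p - 1) : ℕ) : ℝ) / (p:ℝ)^2) := by
      rw [hQcast, hMcast, Finset.prod_div_distrib]
    have h2 : ∀ p ∈ F, (((p ^ 2 - (p - 1) : ℕ) : ℝ) / (p:ℝ)^2) ≤ Real.exp (-((p:ℝ)⁻¹/2)) := by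
      intro p hp
      have hp2 : 2 ≤ p := hF2 p hp
      have hp2R : (2:ℝ) ≤ (p:ℝ) := by exact_mod_cast hp2
      have hppos : (0:ℝ) < (p:ℝ) := by linarith
      have hnum : ((p ^ 2 - (p - 1) : ℕ) : ℝ) = (p:ℝ)^2 - ((p:ℝ) - 1) := by
        have h1 : p - 1 ≤ p ^ 2 := (Nat.sub_le p 1).trans (Nat.le_self_pow two_ne_zero p)
        rw [Nat.cast_sub h1, Nat.cast_sub (by omega : 1 ≤ p)]
        push_cast
        ring
      refine le_trans ?_ (Real.one_sub_le_exp_neg ((p:ℝ)⁻¹/2))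
      rw [hnum, div_le_iff₀ (by positivity)]
      have hinv : (p:ℝ) * (p:ℝ)⁻¹ = 1 := mul_inv_cancel₀ hppos.ne'
      have hrhs : (1 - (p:ℝ)⁻¹/2) * (p:ℝ)^2 = (p:ℝ)^2 - (p:ℝ)/2 := by
        field_simp
      rw [hrhs]
      linarith
    have h3 : (Q:ℝ) / (M:ℝ) ≤ ∏ p ∈ F, Real.exp (-((p:ℝ)⁻¹/2)) := by
      rw [h1]
      refine Finset.prod_le_prod (fun p _ => by positivity) h2
    have h4 : ∏ p ∈ F, Real.exp (-((p:ℝ)⁻¹/2)) = Real.exp (-(∑ p ∈ F, (p:ℝ)⁻¹)/2) := by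
      rw [← Real.exp_sum]
      congr 1
      rw [neg_div, Finset.sum_div]
      exact Finset.sum_neg_distrib _
    have h5 : Real.exp (-(∑ p ∈ F, (p:ℝ)⁻¹)/2) ≤ Real.exp (Real.log (ε/2) - 1) := by
      refine Real.exp_le_exp.mpr ?_
      linarith
    have h6 : Real.exp (Real.log (ε/2) - 1) < ε/2 := by
      rw [Real.exp_sub, Real.exp_log hε2]
      have : (1:ℝ) < Real.exp 1 := by
        have := Real.add_one_le_exp 1
        linarith
      rw [div_lt_iff₀ (by positivity)]
      nlinarith [hε2]
    calc (Q:ℝ)/(M:ℝ) ≤ _ := h3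
    _ = _ := h4
    _ ≤ _ := h5
    _ < ε/2 := h6
  -- choose N₀
  refine ⟨max 1 (⌈(2*(Q:ℝ)+2)/ε⌉₊), fun N hN => ?_⟩
  have hN1 : 1 ≤ N := le_trans (le_max_left _ _) hN
  have hNQ : (2*(Q:ℝ)+2) ≤ ε * N := by
    have h := le_trans (le_max_right _ _) hN
    have := (Nat.ceil_le).mp h
    rw [div_le_iff₀ hε] at this
    calc (2*(Q:ℝ)+2) ≤ N * ε := this
    _ = ε * N := by ring
  have hNpos : (0:ℝ) < N := by exact_mod_cast hN1
  -- counting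
  have hcount : Nat.card {n : ℕ // n ∈ S ∧ 1 ≤ n ∧ n ≤ N} ≤ (N / M + 1) * Q := by
    have hc_eq : Nat.card {n : ℕ // n ∈ S ∧ 1 ≤ n ∧ n ≤ N}
        = ((Finset.Icc 1 N).filter (· ∈ S)).card := by
      have hset : {n : ℕ | n ∈ S ∧ 1 ≤ n ∧ n ≤ N} = ↑((Finset.Icc 1 N).filter (· ∈ S)) := by
        ext n
        simp only [Set.mem_setOf_eq, Finset.coe_filter, Finset.mem_Icc]
        tauto
      calc Nat.card {n : ℕ // n ∈ S ∧ 1 ≤ n ∧ n ≤ N}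
          = Nat.card {n : ℕ | n ∈ S ∧ 1 ≤ n ∧ n ≤ N} := rfl
      _ = ((Finset.Icc 1 N).filter (· ∈ S)).card := by
          rw [Nat.card_coe_set_eq, hset, Set.ncard_coe_finset]
    rw [hc_eq]
    have hsub : (Finset.Icc 1 N).filter (· ∈ S)
        ⊆ (Finset.Icc 1 N).filter (fun n => ∀ p ∈ F, ¬(p ∣ n % M ∧ ¬ p^2 ∣ n % M)) := by
      intro n hn
      rw [Finset.mem_filter] at hn ⊢
      refine ⟨hn.1, ?_⟩
      obtain ⟨x, y, hxy⟩ := hn.2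
      intro p hp hcon
      have hpM : p ∣ M := (dvd_pow_self p two_ne_zero).trans (Finset.dvd_prod_of_mem _ hp)
      have hp2M : p ^ 2 ∣ M := Finset.dvd_prod_of_mem _ hp
      rw [Nat.dvd_mod_iff hpM] at hcon
      rw [Nat.dvd_mod_iff hp2M] at hcon
      have hpn : (p:ℤ) ∣ x ^ 2 + y ^ 2 := by
        rw [hxy]
        exact_mod_cast Int.natCast_dvd_natCast.mpr hcon.1
      obtain ⟨hx, hy⟩ := sq_dvd_of_dvd_sq_add_sq (hFprime p hp) (hF3 p hp) hpn
      have hsq : (p:ℤ)^2 ∣ (n:ℤ) := by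
        rw [← hxy]
        exact dvd_add (pow_dvd_pow_of_dvd hx 2) (pow_dvd_pow_of_dvd hy 2)
      have : p ^ 2 ∣ n := by
        have := hsq
        rw [show ((p:ℤ)^2) = ((p^2:ℕ):ℤ) by push_cast; ring] at this
        exact_mod_cast this
      exact hcon.2 this
    calc ((Finset.Icc 1 N).filter (· ∈ S)).card
        ≤ ((Finset.Icc 1 N).filter (fun n => ∀ p ∈ F, ¬(p ∣ n % M ∧ ¬ p^2 ∣ n % M))).card :=
          Finset.card_le_card hsub
    _ ≤ (N / M + 1) * ((Finset.range M).filter (fun r => ∀ p ∈ F, ¬(p ∣ r ∧ ¬ p^2 ∣ r))).card :=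
          count_mod_le N M hM0 (fun r => ∀ p ∈ F, ¬(p ∣ r ∧ ¬ p^2 ∣ r))
    _ ≤ (N / M + 1) * Q := by
          exact Nat.mul_le_mul_left _ (crt_count_le F hFprime)
  -- final real estimate
  have hfrac : (Nat.card {n : ℕ // n ∈ S ∧ 1 ≤ n ∧ n ≤ N} : ℝ) / N < ε := by
    have h1 : (Nat.card {n : ℕ // n ∈ S ∧ 1 ≤ n ∧ n ≤ N} : ℝ) ≤ ((N / M + 1) * Q : ℕ) := by
      exact_mod_cast hcount
    have h2 : (((N / M + 1) * Q : ℕ) : ℝ) ≤ ((N:ℝ)/(M:ℝ) + 1) * Q := by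
      push_cast
      have := Nat.cast_div_le (m := N) (n := M) (α := ℝ)
      have hQ0 : (0:ℝ) ≤ (Q:ℕ) := Nat.cast_nonneg Q
      nlinarith [this, hQ0]
    have h3 : (((N:ℝ)/(M:ℝ) + 1) * Q) / N = (Q:ℝ)/M + (Q:ℝ)/N := by
      have hM0R : (M:ℝ) ≠ 0 := by exact_mod_cast hM0.ne'
      field_simp
    have h4 : (Q:ℝ)/N < ε/2 := by
      rw [div_lt_iff₀ hNpos]
      nlinarith
    calc (Nat.card {n : ℕ // n ∈ S ∧ 1 ≤ n ∧ n ≤ N} : ℝ) / N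
        ≤ (((N / M + 1) * Q : ℕ) : ℝ) / N := by
          exact div_le_div_of_nonneg_right h1 hNpos.le
    _ ≤ (((N:ℝ)/(M:ℝ) + 1) * Q) / N := div_le_div_of_nonneg_right h2 hNpos.le
    _ = (Q:ℝ)/M + (Q:ℝ)/N := h3
    _ < ε/2 + ε/2 := add_lt_add hQM h4
    _ = ε := by ring
  rw [Real.dist_eq, sub_zero, abs_of_nonneg (by positivity)]
  exact hfrac
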